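/- For the tamed scheme applied to the n-layer neural network with the weaker choice r ≥ (n+1)/2: for λ ∈ (0,1] small enough, the tamed updating function H(θ, y) = ∇_θ U(θ, y) / (1 + √λ |θ|^{2r}) satisfies a dissipativity condition with a quartic environment term, i.e., there exist constants Δ > 0 and C > 0 such that ⟨H(θ, y), θ⟩ ≥ Δ|θ|² − C(1 + |y|⁴) for all θ ∈ ℝ^d and y ∈ ℝ^m. -/

import Mathlib

open scoped RealInnerProductSpace

/-- The index set of the parameter θ = (W₁, …, W_n) of an n-layer network with layer
dimensions dims 0, dims 1, …, dims n : the weight matrix Wᵢ₊₁ ∈ ℝ^{dims (i+1) × dims i}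
is indexed by the fiber over i : Fin n. -/
abbrev NetIdx (n : ℕ) (dims : ℕ → ℕ) : Type :=
  (i : Fin n) × (Fin (dims (i.1 + 1)) × Fin (dims i.1))

/-- The forward pass through the first k layers of the network:
a_0 = z, a_{k+1} = s_{k+1}(W_{k+1} a_k). -/
noncomputable def mlForward (n : ℕ) (dims : ℕ → ℕ) (sact : ℕ → ℝ → ℝ)
    (θ : EuclideanSpace ℝ (NetIdx n dims)) (z : EuclideanSpace ℝ (Fin (dims 0))) :
    (k : ℕ) → Fin (dims k) → ℝ
  | 0 => z
  | (k + 1) => fun j =>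
      if hk : k < n then
        sact (k + 1) (∑ i : Fin (dims k), θ ⟨⟨k, hk⟩, (j, i)⟩ * mlForward n dims sact θ z k i)
      else 0

/-- The n-layer network prediction h(z, θ) = s_n(W_n s_{n-1}(⋯ s_1(W_1 z))). -/
noncomputable def mlNet (n : ℕ) (dims : ℕ → ℕ) (sact : ℕ → ℝ → ℝ)
    (θ : EuclideanSpace ℝ (NetIdx n dims)) (z : EuclideanSpace ℝ (Fin (dims 0))) :
    EuclideanSpace ℝ (Fin (dims n)) :=
  WithLp.toLp 2 (fun j => mlForward n dims sact θ z n j)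

/-- The squared loss |h(z,θ) − l|² of the n-layer network, as a function of θ, with
the data point y = (z, l) given in concatenated form. -/
noncomputable def mlLabel (n : ℕ) (dims : ℕ → ℕ)
    (y : EuclideanSpace ℝ (Fin (dims 0) ⊕ Fin (dims n))) :
    EuclideanSpace ℝ (Fin (dims n)) :=
  WithLp.toLp 2 (fun j => y (Sum.inr j))

noncomputable def mlLoss (n : ℕ) (dims : ℕ → ℕ) (sact : ℕ → ℝ → ℝ)
    (y : EuclideanSpace ℝ (Fin (dims 0) ⊕ Fin (dims n)))
    (θ : EuclideanSpace ℝ (NetIdx n dims)) : ℝ :=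
  ‖mlNet n dims sact θ (WithLp.toLp 2 (fun i => y (Sum.inl i))) - mlLabel n dims y‖ ^ 2


/-- The regularized loss U(θ, y) = |h(z,θ) − l|² + (η/(2(r+1)))|θ|^{2(r+1)}. -/
noncomputable def mlRegLoss (n : ℕ) (dims : ℕ → ℕ) (sact : ℕ → ℝ → ℝ) (η r : ℝ)
    (y : EuclideanSpace ℝ (Fin (dims 0) ⊕ Fin (dims n)))
    (θ : EuclideanSpace ℝ (NetIdx n dims)) : ℝ :=
  mlLoss n dims sact y θ + (η / (2 * (r + 1))) * ‖θ‖ ^ (2 * (r + 1))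

/-- The tamed updating function H(θ, y) = ∇_θ U(θ, y) / (1 + √λ |θ|^{2r}). -/
noncomputable def tamedH (n : ℕ) (dims : ℕ → ℕ) (sact : ℕ → ℝ → ℝ) (η r lam : ℝ)
    (θ : EuclideanSpace ℝ (NetIdx n dims))
    (y : EuclideanSpace ℝ (Fin (dims 0) ⊕ Fin (dims n))) :
    EuclideanSpace ℝ (NetIdx n dims) :=
  (1 + Real.sqrt lam * ‖θ‖ ^ (2 * r))⁻¹ • gradient (mlRegLoss n dims sact η r y) θ

section AuxScalar

private lemma aux_young (η C₀ K b a : ℝ) (hη : 0 < η) (hb : 0 ≤ b) (ha : 0 ≤ a)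
    (hK : 16 * C₀ ^ 2 ≤ K * η) :
    C₀ * (1 + b) ^ 2 * a ≤ η / 4 * a ^ 2 + K * (1 + b ^ 4) := by
  have f2 : (1 + b) ^ 4 ≤ 16 * (1 + b ^ 4) := by
    nlinarith [sq_nonneg (b - 1), sq_nonneg (b ^ 2 - 1), sq_nonneg b, sq_nonneg (b ^ 2 - b),
      pow_nonneg hb 3, pow_nonneg hb 4]
  have t1 : 0 ≤ (η * a - 2 * C₀ * (1 + b) ^ 2) ^ 2 := sq_nonneg _
  have q2 : C₀ ^ 2 * (1 + b) ^ 4 ≤ C₀ ^ 2 * (16 * (1 + b ^ 4)) :=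
    mul_le_mul_of_nonneg_left f2 (sq_nonneg _)
  have t3 : 0 ≤ (K * η - 16 * C₀ ^ 2) * (1 + b ^ 4) :=
    mul_nonneg (by linarith) (by positivity)
  nlinarith [t1, q2, t3, hη, mul_pos hη hη]

private lemma scalar_main (η C₀ s K C a b A w : ℝ) (hη : 0 < η) (hC₀ : 0 < C₀)
    (hs : 0 < s) (hs1 : s ≤ 1) (hK : 16 * C₀ ^ 2 ≤ K * η)
    (hC1 : η / 2 + K + 3 * C₀ ≤ C) (hCs : K ≤ C * s)
    (ha : 0 ≤ a) (hb : 0 ≤ b) (hA0 : 0 ≤ A) (hw : 0 ≤ w)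
    (h1 : a ^ 2 ≤ 1 + A * a ^ 2) (h2 : w * a ≤ 1 + a * A) :
    (η / 4 * a ^ 2 - C * (1 + b ^ 4)) * (1 + s * A)
      ≤ η * A * a ^ 2 - C₀ * (1 + b) ^ 2 * (1 + w) * a := by
  have g1 : C₀ * (1 + b) ^ 2 * a ≤ η / 4 * a ^ 2 + K * (1 + b ^ 4) :=
    aux_young η C₀ K b a hη hb ha hK
  have g2 : C₀ * (1 + b) ^ 2 * a * A ≤ (η / 4 * a ^ 2 + K * (1 + b ^ 4)) * A :=
    mul_le_mul_of_nonneg_right g1 hA0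
  have g3 : C₀ * (1 + b) ^ 2 * (w * a) ≤ C₀ * (1 + b) ^ 2 * (1 + a * A) :=
    mul_le_mul_of_nonneg_left h2 (by positivity)
  have f3 : (1 + b) ^ 2 ≤ 3 * (1 + b ^ 4) := by
    nlinarith [sq_nonneg (b - 1), sq_nonneg (b ^ 2 - 1), sq_nonneg b]
  have g4 : C₀ * (1 + b) ^ 2 ≤ C₀ * (3 * (1 + b ^ 4)) :=
    mul_le_mul_of_nonneg_left f3 hC₀.le
  have g5 : η / 2 * a ^ 2 ≤ η / 2 * (1 + A * a ^ 2) :=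
    mul_le_mul_of_nonneg_left h1 (by positivity)
  have g6 : K * ((1 + b ^ 4) * A) ≤ (C * s) * ((1 + b ^ 4) * A) :=
    mul_le_mul_of_nonneg_right hCs (by positivity)
  have g7 : η / 4 * (s * (A * a ^ 2)) ≤ η / 4 * (A * a ^ 2) := by
    have : s * (A * a ^ 2) ≤ A * a ^ 2 := by
      nlinarith [mul_nonneg hA0 (sq_nonneg a)]
    exact mul_le_mul_of_nonneg_left this (by positivity)
  have g8 : 0 ≤ (C - (η / 2 + K + 3 * C₀)) * b ^ 4 :=
    mul_nonneg (by linarith) (by positivity)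
  have g9 : 0 ≤ η * b ^ 4 := mul_nonneg hη.le (by positivity)
  linarith [g1, g2, g3, g4, g5, g6, g7, g8, g9]

private lemma rpow_h1 (a t : ℝ) (ha : 0 ≤ a) (ht : 0 ≤ t) :
    a ^ 2 ≤ 1 + a ^ t * a ^ 2 := by
  rcases le_total a 1 with h | h
  · have h2 : a ^ 2 ≤ 1 := by nlinarith
    have h3 : 0 ≤ a ^ t * a ^ 2 := mul_nonneg (Real.rpow_nonneg ha t) (sq_nonneg a)
    linarith
  · have h2 : 1 ≤ a ^ t := Real.one_le_rpow h ht
    nlinarith [sq_nonneg a]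

private lemma rpow_h2 (a : ℝ) (m : ℕ) (t : ℝ) (ha : 0 ≤ a) (hm : (m : ℝ) + 1 ≤ t + 1) :
    a ^ m * a ≤ 1 + a * a ^ t := by
  rcases le_total a 1 with h | h
  · have h2 : a ^ m ≤ 1 := pow_le_one₀ ha h
    have h3 : 0 ≤ a * a ^ t := mul_nonneg ha (Real.rpow_nonneg ha t)
    nlinarith
  · have h0 : 0 < a := lt_of_lt_of_le one_pos h
    have e : a ^ m * a = a ^ ((m + 1 : ℕ) : ℝ) := by
      rw [Real.rpow_natCast, pow_succ]
    rw [e]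
    have h4 : a ^ ((m + 1 : ℕ) : ℝ) ≤ a ^ (t + 1) :=
      Real.rpow_le_rpow_of_exponent_le h (by push_cast; linarith)
    have e2 : a ^ (t + 1) = a ^ t * a := by rw [Real.rpow_add h0, Real.rpow_one]
    nlinarith [h4]

private lemma rpow_two_mul (x t : ℝ) (hx : 0 ≤ x) : x ^ (2 * t) = (x ^ 2 : ℝ) ^ t := by
  rw [show (2 : ℝ) * t = ((2 : ℕ) : ℝ) * t by norm_num, Real.rpow_mul hx,
    Real.rpow_natCast]

end AuxScalar

section AuxDiff

private lemma mlForward_diff (n : ℕ) (dims : ℕ → ℕ) (sact : ℕ → ℝ → ℝ)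
    (hsdiff : ∀ i, 1 ≤ i → i ≤ n → ContDiff ℝ 1 (sact i))
    (z : EuclideanSpace ℝ (Fin (dims 0))) :
    ∀ (k : ℕ) (j : Fin (dims k)),
      Differentiable ℝ
        (fun θ : EuclideanSpace ℝ (NetIdx n dims) => mlForward n dims sact θ z k j) := by
  intro k
  induction k with
  | zero => intro j; exact differentiable_const (z j)
  | succ k ih =>
    intro j
    by_cases hk : k < n
    · have heq : (fun θ : EuclideanSpace ℝ (NetIdx n dims) => mlForward n dims sact θ z (k + 1) j)
          = fun θ => sact (k + 1)
              (∑ i : Fin (dims k), θ ⟨⟨k, hk⟩, (j, i)⟩ * mlForward n dims sact θ z k i) := by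
        funext θ
        simp only [mlForward, hk, dif_pos]
      rw [heq]
      have hinner : Differentiable ℝ
          (fun θ : EuclideanSpace ℝ (NetIdx n dims) =>
            ∑ i : Fin (dims k), θ ⟨⟨k, hk⟩, (j, i)⟩ * mlForward n dims sact θ z k i) := by
        apply Differentiable.fun_sum
        intro i _
        exact ((EuclideanSpace.proj (⟨⟨k, hk⟩, (j, i)⟩ : NetIdx n dims)).differentiable).mul (ih i)
      exact ((hsdiff (k + 1) (by omega) (by omega)).differentiable one_ne_zero).comp hinner
    · have heq : (fun θ : EuclideanSpace ℝ (NetIdx n dims) => mlForward n dims sact θ z (k + 1) j)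
          = fun _ => 0 := by
        funext θ
        simp only [mlForward, hk, dif_neg, not_false_iff]
      rw [heq]
      exact differentiable_const 0

private lemma mlLoss_eq (n : ℕ) (dims : ℕ → ℕ) (sact : ℕ → ℝ → ℝ)
    (y : EuclideanSpace ℝ (Fin (dims 0) ⊕ Fin (dims n))) :
    mlLoss n dims sact y = fun θ =>
      ∑ j : Fin (dims n),
        (mlForward n dims sact θ (WithLp.toLp 2 (fun i => y (Sum.inl i))) n j - y (Sum.inr j)) ^ 2 := by
  funext θ
  rw [mlLoss, EuclideanSpace.norm_eq, Real.sq_sqrt (by positivity)]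
  refine Finset.sum_congr rfl fun j _ => ?_
  rw [Real.norm_eq_abs, sq_abs]
  rfl

private lemma mlLoss_diff (n : ℕ) (dims : ℕ → ℕ) (sact : ℕ → ℝ → ℝ)
    (hsdiff : ∀ i, 1 ≤ i → i ≤ n → ContDiff ℝ 1 (sact i))
    (y : EuclideanSpace ℝ (Fin (dims 0) ⊕ Fin (dims n))) :
    Differentiable ℝ (mlLoss n dims sact y) := by
  rw [mlLoss_eq]
  apply Differentiable.fun_sum
  intro j _
  exact ((mlForward_diff n dims sact hsdiff _ n j).sub_const _).pow 2

end AuxDiff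

set_option maxHeartbeats 1000000 in
/-- remark after Lemma 6 of the paper: for the tamed scheme applied to
the n-layer network with the weaker choice r ≥ (n+1)/2, for λ ∈ (0,1] small enough
the tamed updating function satisfies a dissipativity condition with a quartic
environment term: ⟨H(θ,y), θ⟩ ≥ Δ|θ|² − C(1 + |y|⁴) for some Δ > 0, C > 0. -/
theorem tamed_scheme_dissipativity_quartic
    (n : ℕ) (hn : 1 < n) (dims : ℕ → ℕ) (hdims : ∀ i ≤ n, 0 < dims i)
    (sact : ℕ → ℝ → ℝ) (Ms : ℝ)
    (hsdiff : ∀ i, 1 ≤ i → i ≤ n → ContDiff ℝ 1 (sact i))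
    (hsbd : ∀ i, 1 ≤ i → i ≤ n → ∀ x, |sact i x| ≤ Ms)
    (hs'bd : ∀ i, 1 ≤ i → i ≤ n → ∀ x, |deriv (sact i) x| ≤ Ms)
    -- the known polynomial bound on the gradient of the unregularized loss
    (C₀ : ℝ) (hC₀ : 0 < C₀)
    (hgradbd : ∀ (θ : EuclideanSpace ℝ (NetIdx n dims))
        (y : EuclideanSpace ℝ (Fin (dims 0) ⊕ Fin (dims n))),
        ‖gradient (mlLoss n dims sact y) θ‖ ≤ C₀ * (1 + ‖y‖) ^ 2 * (1 + ‖θ‖ ^ (n + 1)))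
    (η : ℝ) (hη : 0 < η) (r : ℝ) (hr : ((n : ℝ) + 1) / 2 ≤ r) :
    ∃ lam₀ > (0 : ℝ), ∀ lam : ℝ, 0 < lam → lam ≤ lam₀ → lam ≤ 1 →
      ∃ Δ > (0 : ℝ), ∃ C > (0 : ℝ),
        ∀ (θ : EuclideanSpace ℝ (NetIdx n dims))
          (y : EuclideanSpace ℝ (Fin (dims 0) ⊕ Fin (dims n))),
          ⟪tamedH n dims sact η r lam θ y, θ⟫
            ≥ Δ * ‖θ‖ ^ 2 - C * (1 + ‖y‖ ^ 4) := by
  have hn0 : (0 : ℝ) ≤ (n : ℝ) := Nat.cast_nonneg n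
  have hr0 : 0 < r := by linarith
  refine ⟨1, one_pos, ?_⟩
  intro lam hlam _ hlam1
  set s := Real.sqrt lam with hs_def
  have hs : 0 < s := Real.sqrt_pos.mpr hlam
  have hs1 : s ≤ 1 := Real.sqrt_le_one.mpr hlam1
  set K : ℝ := 16 * C₀ ^ 2 / η with hK_def
  have hK0 : 0 < K := by positivity
  set C : ℝ := η / 2 + K + 3 * C₀ + K / s with hC_def
  have hCpos : 0 < C := by positivity
  refine ⟨η / 4, by positivity, C, hCpos, ?_⟩
  have hK : 16 * C₀ ^ 2 ≤ K * η := by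
    rw [hK_def, div_mul_cancel₀ _ hη.ne']
  have hC1 : η / 2 + K + 3 * C₀ ≤ C := by
    have : 0 ≤ K / s := div_nonneg hK0.le hs.le
    linarith
  have hCs : K ≤ C * s := by
    have h1 : K / s * s = K := div_mul_cancel₀ K hs.ne'
    have h2 : 0 ≤ (η / 2 + K + 3 * C₀) * s := by positivity
    rw [hC_def]
    nlinarith [h1, h2]
  intro θ y
  -- differentiability and derivative of the regularized loss
  have hfdiff : Differentiable ℝ (mlLoss n dims sact y) := mlLoss_diff n dims sact hsdiff y
  have hN : HasFDerivAt (fun θ : EuclideanSpace ℝ (NetIdx n dims) => ‖θ‖ ^ 2)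
      (2 • (innerSL ℝ θ)) θ := (hasStrictFDerivAt_norm_sq θ).hasFDerivAt
  have hq : HasDerivAt (fun t : ℝ => t ^ (r + 1))
      ((r + 1) * (‖θ‖ ^ 2 : ℝ) ^ (r + 1 - 1)) (‖θ‖ ^ 2) :=
    Real.hasDerivAt_rpow_const (Or.inr (by linarith))
  have hg0 : HasFDerivAt (fun θ : EuclideanSpace ℝ (NetIdx n dims) => (‖θ‖ ^ 2 : ℝ) ^ (r + 1))
      (((r + 1) * (‖θ‖ ^ 2 : ℝ) ^ (r + 1 - 1)) • (2 • innerSL ℝ θ)) θ :=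
    by have h := hq.comp_hasFDerivAt θ hN; exact h
  have hg : HasFDerivAt
      (fun θ : EuclideanSpace ℝ (NetIdx n dims) => η / (2 * (r + 1)) * ((‖θ‖ ^ 2 : ℝ) ^ (r + 1)))
      ((η / (2 * (r + 1))) • (((r + 1) * (‖θ‖ ^ 2 : ℝ) ^ (r + 1 - 1)) • (2 • innerSL ℝ θ))) θ :=
    hg0.const_mul _
  have hUeq : mlRegLoss n dims sact η r y = fun θ : EuclideanSpace ℝ (NetIdx n dims) =>
      mlLoss n dims sact y θ + η / (2 * (r + 1)) * ((‖θ‖ ^ 2 : ℝ) ^ (r + 1)) := by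
    funext θ'
    rw [mlRegLoss, rpow_two_mul ‖θ'‖ (r + 1) (norm_nonneg _)]
  have hU : HasFDerivAt (mlRegLoss n dims sact η r y)
      (fderiv ℝ (mlLoss n dims sact y) θ
        + (η / (2 * (r + 1))) • (((r + 1) * (‖θ‖ ^ 2 : ℝ) ^ (r + 1 - 1)) • (2 • innerSL ℝ θ))) θ := by
    rw [hUeq]
    exact ((hfdiff θ).hasFDerivAt).add hg
  have grad_inner : ∀ F : EuclideanSpace ℝ (NetIdx n dims) → ℝ,
      ⟪gradient F θ, θ⟫ = fderiv ℝ F θ θ := fun F =>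
    InnerProductSpace.toDual_symm_apply
  have happ : fderiv ℝ (mlRegLoss n dims sact η r y) θ θ
      = fderiv ℝ (mlLoss n dims sact y) θ θ + η * (‖θ‖ ^ (2 * r)) * ‖θ‖ ^ 2 := by
    rw [hU.fderiv]
    have hrr : r + 1 - 1 = r := by ring
    have hpow : (‖θ‖ ^ 2 : ℝ) ^ r = ‖θ‖ ^ (2 * r) := (rpow_two_mul ‖θ‖ r (norm_nonneg θ)).symm
    simp only [ContinuousLinearMap.add_apply, ContinuousLinearMap.smul_apply,
      innerSL_apply_apply, smul_eq_mul, hrr, hpow, real_inner_self_eq_norm_sq, nsmul_eq_mul]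
    have hr1 : r + 1 ≠ 0 := by positivity
    field_simp
    ring
  have hFbound : -(C₀ * (1 + ‖y‖) ^ 2 * (1 + ‖θ‖ ^ (n + 1)) * ‖θ‖)
      ≤ fderiv ℝ (mlLoss n dims sact y) θ θ := by
    have e1 := grad_inner (mlLoss n dims sact y)
    have e2 := abs_real_inner_le_norm (gradient (mlLoss n dims sact y) θ) θ
    have e3 := mul_le_mul_of_nonneg_right (hgradbd θ y) (norm_nonneg θ)
    rw [e1] at e2
    have e4 := neg_abs_le (fderiv ℝ (mlLoss n dims sact y) θ θ)
    linarith
  have hA0 : 0 ≤ ‖θ‖ ^ (2 * r) := Real.rpow_nonneg (norm_nonneg θ) _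
  have h1 : ‖θ‖ ^ 2 ≤ 1 + ‖θ‖ ^ (2 * r) * ‖θ‖ ^ 2 :=
    rpow_h1 ‖θ‖ (2 * r) (norm_nonneg θ) (by linarith)
  have h2 : ‖θ‖ ^ (n + 1) * ‖θ‖ ≤ 1 + ‖θ‖ * ‖θ‖ ^ (2 * r) :=
    rpow_h2 ‖θ‖ (n + 1) (2 * r) (norm_nonneg θ) (by push_cast; linarith)
  have hsc := scalar_main η C₀ s K C ‖θ‖ ‖y‖ (‖θ‖ ^ (2 * r)) (‖θ‖ ^ (n + 1))
    hη hC₀ hs hs1 hK hC1 hCs (norm_nonneg θ) (norm_nonneg y) hA0 (by positivity) h1 h2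
  have hD : 0 < 1 + s * ‖θ‖ ^ (2 * r) := by positivity
  have expand : ⟪tamedH n dims sact η r lam θ y, θ⟫
      = (1 + s * ‖θ‖ ^ (2 * r))⁻¹ * fderiv ℝ (mlRegLoss n dims sact η r y) θ θ := by
    rw [tamedH, real_inner_smul_left, grad_inner, hs_def]
  rw [ge_iff_le, expand]
  have hstep : (η / 4 * ‖θ‖ ^ 2 - C * (1 + ‖y‖ ^ 4)) * (1 + s * ‖θ‖ ^ (2 * r))
      ≤ fderiv ℝ (mlRegLoss n dims sact η r y) θ θ := by
    rw [happ]
    linarith [hsc, hFbound]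
  calc η / 4 * ‖θ‖ ^ 2 - C * (1 + ‖y‖ ^ 4)
      = (1 + s * ‖θ‖ ^ (2 * r))⁻¹
          * ((η / 4 * ‖θ‖ ^ 2 - C * (1 + ‖y‖ ^ 4)) * (1 + s * ‖θ‖ ^ (2 * r))) := by
        field_simp
    _ ≤ (1 + s * ‖θ‖ ^ (2 * r))⁻¹ * fderiv ℝ (mlRegLoss n dims sact η r y) θ θ :=
        mul_le_mul_of_nonneg_left hstep (inv_nonneg.mpr hD.le)
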